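/- Let u: [0,1] → ℝ³ be a continuous function satisfying u(0) = (1,0,0), u(1) = (0,1,0), u(t/2) = M_0·u(t) and u((t+1)/2) = M_1·u(t) for all t ∈ [0,1]. Then for all s, t ∈ [0,1], ‖u(s) − u(t)‖ ≤ C·|s − t|^α where α = ln(3/5)/ln(1/2) and C is some constant; in particular u is Hölder continuous with exponent log₂(5/3). -/

import Mathlib

noncomputable def M0 : Matrix (Fin 3) (Fin 3) ℝ :=
  (1/5 : ℝ) • !![5, 2, 2; 0, 2, 1; 0, 1, 2]

noncomputable def M1 : Matrix (Fin 3) (Fin 3) ℝ :=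
  (1/5 : ℝ) • !![2, 0, 1; 2, 5, 2; 1, 0, 2]

/-- Euclidean norm on ℝ³. -/
noncomputable def norm2 (v : Fin 3 → ℝ) : ℝ :=
  Real.sqrt (v 0 ^ 2 + v 1 ^ 2 + v 2 ^ 2)

lemma norm2_eq (v : Fin 3 → ℝ) :
    norm2 v = ‖(WithLp.equiv 2 (Fin 3 → ℝ)).symm v‖ := by
  rw [EuclideanSpace.norm_eq]
  simp [norm2, Fin.sum_univ_three, Real.norm_eq_abs, sq_abs]

lemma norm2_nonneg (v : Fin 3 → ℝ) : 0 ≤ norm2 v := Real.sqrt_nonneg _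

lemma norm2_neg (v : Fin 3 → ℝ) : norm2 (-v) = norm2 v := by
  rw [norm2_eq, norm2_eq, WithLp.equiv_symm_apply, WithLp.toLp_neg, norm_neg]

lemma norm2_triangle (x y : Fin 3 → ℝ) : norm2 (x + y) ≤ norm2 x + norm2 y := by
  rw [norm2_eq, norm2_eq, norm2_eq, WithLp.equiv_symm_apply, WithLp.toLp_add]
  exact norm_add_le _ _

lemma sum_mulVec0 (v : Fin 3 → ℝ) :
    (M0.mulVec v) 0 + (M0.mulVec v) 1 + (M0.mulVec v) 2 = v 0 + v 1 + v 2 := by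
  simp [M0, Matrix.mulVec, dotProduct, Fin.sum_univ_three]
  ring

lemma sum_mulVec1 (v : Fin 3 → ℝ) :
    (M1.mulVec v) 0 + (M1.mulVec v) 1 + (M1.mulVec v) 2 = v 0 + v 1 + v 2 := by
  simp [M1, Matrix.mulVec, dotProduct, Fin.sum_univ_three]
  ring

lemma sqrt_nine (B : ℝ) : Real.sqrt ((9/25) * B) = 3/5 * Real.sqrt B := by
  rw [Real.sqrt_mul (by norm_num), show (9/25:ℝ) = (3/5)^2 by norm_num,
    Real.sqrt_sq (by norm_num)]

lemma contract0 (v : Fin 3 → ℝ) (h : v 0 + v 1 + v 2 = 0) :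
    norm2 (M0.mulVec v) ≤ 3/5 * norm2 v := by
  rw [norm2, norm2, ← sqrt_nine]
  apply Real.sqrt_le_sqrt
  have e : ∀ i, M0.mulVec v i = (1/5) * (!![5, 2, 2; 0, 2, 1; 0, 1, 2] : Matrix (Fin 3) (Fin 3) ℝ).mulVec v i := by
    intro i
    simp [M0, Matrix.mulVec, dotProduct, Fin.sum_univ_three]
    ring
  rw [e 0, e 1, e 2]
  simp [Matrix.mulVec, dotProduct, Fin.sum_univ_three]
  have ha : v 0 = -v 1 - v 2 := by linarith
  rw [ha]
  nlinarith [sq_nonneg (v 1 - v 2)]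

lemma contract1 (v : Fin 3 → ℝ) (h : v 0 + v 1 + v 2 = 0) :
    norm2 (M1.mulVec v) ≤ 3/5 * norm2 v := by
  rw [norm2, norm2, ← sqrt_nine]
  apply Real.sqrt_le_sqrt
  have e : ∀ i, M1.mulVec v i = (1/5) * (!![2, 0, 1; 2, 5, 2; 1, 0, 2] : Matrix (Fin 3) (Fin 3) ℝ).mulVec v i := by
    intro i
    simp [M1, Matrix.mulVec, dotProduct, Fin.sum_univ_three]
    ring
  rw [e 0, e 1, e 2]
  simp [Matrix.mulVec, dotProduct, Fin.sum_univ_three]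
  have hb : v 1 = -v 0 - v 2 := by linarith
  rw [hb]
  nlinarith [sq_nonneg (v 0 - v 2)]

lemma sum_dyadic (u : ℝ → (Fin 3 → ℝ))
    (h0 : u 0 = ![1, 0, 0]) (h1 : u 1 = ![0, 1, 0])
    (hrec0 : ∀ t ∈ Set.Icc (0:ℝ) 1, u (t / 2) = M0.mulVec (u t))
    (hrec1 : ∀ t ∈ Set.Icc (0:ℝ) 1, u ((t + 1) / 2) = M1.mulVec (u t)) :
    ∀ n : ℕ, ∀ k : ℕ, k ≤ 2^n →
      u ((k:ℝ)/2^n) 0 + u ((k:ℝ)/2^n) 1 + u ((k:ℝ)/2^n) 2 = 1 := by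
  intro n
  induction n with
  | zero =>
    intro k hk
    interval_cases k
    · norm_num [h0, Matrix.cons_val_two]
    · norm_num [h1, Matrix.cons_val_two]
  | succ n ih =>
    intro k hk
    by_cases hkn : k ≤ 2^n
    · have hmem : ((k:ℝ)/2^n) ∈ Set.Icc (0:ℝ) 1 := by
        constructor
        · positivity
        · rw [div_le_one (by positivity)]
          exact_mod_cast hkn
      have e : ((k:ℝ)/2^(n+1)) = ((k:ℝ)/2^n)/2 := by ring
      rw [e, hrec0 _ hmem, sum_mulVec0]
      exact ih k hkn
    · push_neg at hkn
      set j := k - 2^n with hj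
      have hjk : (k:ℝ) = (j:ℝ) + 2^n := by
        have : j + 2^n = k := Nat.sub_add_cancel hkn.le
        push_cast [← this]; ring
      have hjn : j ≤ 2^n := by omega
      have hmem : ((j:ℝ)/2^n) ∈ Set.Icc (0:ℝ) 1 := by
        constructor
        · positivity
        · rw [div_le_one (by positivity)]
          exact_mod_cast hjn
      have e : ((k:ℝ)/2^(n+1)) = (((j:ℝ)/2^n) + 1)/2 := by
        rw [hjk, pow_succ]
        rw [div_add' _ _ _ (by positivity : (2:ℝ)^n ≠ 0), div_div, one_mul]
      rw [e, hrec1 _ hmem, sum_mulVec1]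
      exact ih j hjn

lemma sum_eq_one (u : ℝ → (Fin 3 → ℝ))
    (hcont : ContinuousOn u (Set.Icc 0 1))
    (h0 : u 0 = ![1, 0, 0]) (h1 : u 1 = ![0, 1, 0])
    (hrec0 : ∀ t ∈ Set.Icc (0:ℝ) 1, u (t / 2) = M0.mulVec (u t))
    (hrec1 : ∀ t ∈ Set.Icc (0:ℝ) 1, u ((t + 1) / 2) = M1.mulVec (u t)) :
    ∀ t ∈ Set.Icc (0:ℝ) 1, u t 0 + u t 1 + u t 2 = 1 := by
  intro t ht
  set σ : ℝ → ℝ := fun t => u t 0 + u t 1 + u t 2 with hσ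
  have hσc : ContinuousOn σ (Set.Icc 0 1) := by
    apply ContinuousOn.add
    apply ContinuousOn.add
    · exact (continuous_apply 0).comp_continuousOn hcont
    · exact (continuous_apply 1).comp_continuousOn hcont
    · exact (continuous_apply 2).comp_continuousOn hcont
  set x : ℕ → ℝ := fun n => (⌊2^n * t⌋₊ : ℝ)/2^n with hx
  have ht0 : 0 ≤ t := ht.1
  have hxle : ∀ n, x n ≤ t := by
    intro n
    rw [hx]
    simp only
    rw [div_le_iff₀ (by positivity)]
    calc (⌊2^n * t⌋₊ : ℝ) ≤ 2^n * t := Nat.floor_le (by positivity)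
    _ = t * 2^n := by ring
  have hxgt : ∀ n, t - (1/2)^n < x n := by
    intro n
    have := Nat.lt_floor_add_one (2^n * t)
    rw [hx]
    simp only
    rw [sub_lt_iff_lt_add, div_add' _ _ _ (by positivity : (2:ℝ)^n ≠ 0),
      lt_div_iff₀ (by positivity)]
    have h2 : ((1:ℝ)/2)^n * 2^n = 1 := by
      rw [← mul_pow]; norm_num
    nlinarith [this]
  have hxmem : ∀ n, x n ∈ Set.Icc (0:ℝ) 1 := by
    intro n
    exact ⟨by positivity, (hxle n).trans ht.2⟩
  have hdy : ∀ n, σ (x n) = 1 := by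
    intro n
    apply sum_dyadic u h0 h1 hrec0 hrec1 n
    have := (hxle n).trans ht.2
    rw [hx] at this
    simp only at this
    rw [div_le_one (by positivity)] at this
    exact_mod_cast this
  have htend : Filter.Tendsto x Filter.atTop (nhds t) := by
    apply tendsto_of_tendsto_of_tendsto_of_le_of_le (g := fun n => t - (1/2)^n)
      (h := fun _ => t)
    · have : Filter.Tendsto (fun n : ℕ => (1/2:ℝ)^n) Filter.atTop (nhds 0) :=
        tendsto_pow_atTop_nhds_zero_of_lt_one (by norm_num) (by norm_num)
      simpa using (tendsto_const_nhds (x := t)).sub this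
    · exact tendsto_const_nhds
    · exact fun n => (hxgt n).le
    · exact hxle
  have htendW : Filter.Tendsto x Filter.atTop (nhdsWithin t (Set.Icc 0 1)) := by
    rw [tendsto_nhdsWithin_iff]
    exact ⟨htend, Filter.Eventually.of_forall hxmem⟩
  have : Filter.Tendsto (σ ∘ x) Filter.atTop (nhds (σ t)) :=
    (hσc t ht).tendsto.comp htendW
  have h1' : Filter.Tendsto (σ ∘ x) Filter.atTop (nhds 1) := by
    have he : (σ ∘ x) = fun _ => (1:ℝ) := funext hdy
    rw [he]
    exact tendsto_const_nhds
  exact tendsto_nhds_unique this h1'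

lemma holder_dyadic (u : ℝ → (Fin 3 → ℝ))
    (hcont : ContinuousOn u (Set.Icc 0 1))
    (h0 : u 0 = ![1, 0, 0]) (h1 : u 1 = ![0, 1, 0])
    (hrec0 : ∀ t ∈ Set.Icc (0:ℝ) 1, u (t / 2) = M0.mulVec (u t))
    (hrec1 : ∀ t ∈ Set.Icc (0:ℝ) 1, u ((t + 1) / 2) = M1.mulVec (u t))
    (D : ℝ)
    (hD : ∀ s ∈ Set.Icc (0:ℝ) 1, ∀ t ∈ Set.Icc (0:ℝ) 1, norm2 (u s - u t) ≤ D) :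
    ∀ n : ℕ, ∀ k : ℕ, ∀ s ∈ Set.Icc (0:ℝ) 1, ∀ t ∈ Set.Icc (0:ℝ) 1,
      (k:ℝ)/2^n ≤ s → s ≤ ((k:ℝ)+1)/2^n → (k:ℝ)/2^n ≤ t → t ≤ ((k:ℝ)+1)/2^n →
      norm2 (u s - u t) ≤ D * (3/5)^n := by
  have hsum := sum_eq_one u hcont h0 h1 hrec0 hrec1
  intro n
  induction n with
  | zero =>
    intro k s hs t ht _ _ _ _
    simpa using hD s hs t ht
  | succ n ih =>
    intro k s hs t ht hks hsk hkt htk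
    by_cases hkn : k < 2^n
    · -- left half
      have hk1 : ((k:ℝ)+1) ≤ 2^n := by
        have : (k+1 : ℕ) ≤ 2^n := hkn
        exact_mod_cast this
      have hs2 : s ≤ 1/2 := by
        have h2 : ((k:ℝ)+1)/2^(n+1) ≤ 1/2 := by
          rw [div_le_div_iff₀ (by positivity) (by norm_num), pow_succ]
          nlinarith [hk1]
        linarith [hsk]
      have ht2 : t ≤ 1/2 := by
        have h2 : ((k:ℝ)+1)/2^(n+1) ≤ 1/2 := by
          rw [div_le_div_iff₀ (by positivity) (by norm_num), pow_succ]
          nlinarith [hk1]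
        linarith [htk]
      have hsm : (2*s) ∈ Set.Icc (0:ℝ) 1 := ⟨by linarith [hs.1], by linarith⟩
      have htm : (2*t) ∈ Set.Icc (0:ℝ) 1 := ⟨by linarith [ht.1], by linarith⟩
      have es : u s = M0.mulVec (u (2*s)) := by
        have := hrec0 (2*s) hsm
        rwa [show (2*s)/2 = s by ring] at this
      have et : u t = M0.mulVec (u (2*t)) := by
        have := hrec0 (2*t) htm
        rwa [show (2*t)/2 = t by ring] at this
      have hv : (u (2*s) - u (2*t)) 0 + (u (2*s) - u (2*t)) 1 +
          (u (2*s) - u (2*t)) 2 = 0 := by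
        simp only [Pi.sub_apply]
        have e1 := hsum (2*s) hsm
        have e2 := hsum (2*t) htm
        linarith
      calc norm2 (u s - u t) = norm2 (M0.mulVec (u (2*s) - u (2*t))) := by
            rw [es, et, Matrix.mulVec_sub]
      _ ≤ 3/5 * norm2 (u (2*s) - u (2*t)) := contract0 _ hv
      _ ≤ 3/5 * (D * (3/5)^n) := by
            have := ih k (2*s) hsm (2*t) htm
              (by rw [pow_succ] at hks; rw [div_le_iff₀ (by positivity)] at hks ⊢
                  nlinarith [hks])
              (by rw [pow_succ] at hsk; rw [le_div_iff₀ (by positivity)] at hsk ⊢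
                  nlinarith [hsk])
              (by rw [pow_succ] at hkt; rw [div_le_iff₀ (by positivity)] at hkt ⊢
                  nlinarith [hkt])
              (by rw [pow_succ] at htk; rw [le_div_iff₀ (by positivity)] at htk ⊢
                  nlinarith [htk])
            linarith
      _ = D * (3/5)^(n+1) := by ring
    · -- right half
      push_neg at hkn
      set j := k - 2^n with hj
      have hjk : (k:ℝ) = (j:ℝ) + 2^n := by
        have : j + 2^n = k := Nat.sub_add_cancel hkn
        push_cast [← this]; ring
      have hs2 : 1/2 ≤ s := by
        have h2 : (1:ℝ)/2 ≤ (k:ℝ)/2^(n+1) := by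
          rw [div_le_div_iff₀ (by norm_num) (by positivity), pow_succ, hjk]
          have : (0:ℝ) ≤ (j:ℝ) := Nat.cast_nonneg j
          nlinarith
        linarith [hks]
      have ht2 : 1/2 ≤ t := by
        have h2 : (1:ℝ)/2 ≤ (k:ℝ)/2^(n+1) := by
          rw [div_le_div_iff₀ (by norm_num) (by positivity), pow_succ, hjk]
          have : (0:ℝ) ≤ (j:ℝ) := Nat.cast_nonneg j
          nlinarith
        linarith [hkt]
      have hsm : (2*s-1) ∈ Set.Icc (0:ℝ) 1 := ⟨by linarith, by linarith [hs.2]⟩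
      have htm : (2*t-1) ∈ Set.Icc (0:ℝ) 1 := ⟨by linarith, by linarith [ht.2]⟩
      have es : u s = M1.mulVec (u (2*s-1)) := by
        have := hrec1 (2*s-1) hsm
        rwa [show ((2*s-1)+1)/2 = s by ring] at this
      have et : u t = M1.mulVec (u (2*t-1)) := by
        have := hrec1 (2*t-1) htm
        rwa [show ((2*t-1)+1)/2 = t by ring] at this
      have hv : (u (2*s-1) - u (2*t-1)) 0 + (u (2*s-1) - u (2*t-1)) 1 +
          (u (2*s-1) - u (2*t-1)) 2 = 0 := by
        simp only [Pi.sub_apply]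
        have e1 := hsum (2*s-1) hsm
        have e2 := hsum (2*t-1) htm
        linarith
      calc norm2 (u s - u t) = norm2 (M1.mulVec (u (2*s-1) - u (2*t-1))) := by
            rw [es, et, Matrix.mulVec_sub]
      _ ≤ 3/5 * norm2 (u (2*s-1) - u (2*t-1)) := contract1 _ hv
      _ ≤ 3/5 * (D * (3/5)^n) := by
            have := ih j (2*s-1) hsm (2*t-1) htm
              (by rw [pow_succ, hjk] at hks; rw [div_le_iff₀ (by positivity)] at hks ⊢
                  nlinarith [hks])
              (by rw [pow_succ, hjk] at hsk; rw [le_div_iff₀ (by positivity)] at hsk ⊢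
                  nlinarith [hsk])
              (by rw [pow_succ, hjk] at hkt; rw [div_le_iff₀ (by positivity)] at hkt ⊢
                  nlinarith [hkt])
              (by rw [pow_succ, hjk] at htk; rw [le_div_iff₀ (by positivity)] at htk ⊢
                  nlinarith [htk])
            linarith
      _ = D * (3/5)^(n+1) := by ring

lemma alpha_pos : 0 < Real.log (3/5) / Real.log (1/2) :=
  div_pos_of_neg_of_neg (Real.log_neg (by norm_num) (by norm_num))
    (Real.log_neg (by norm_num) (by norm_num))

lemma alpha_le_one : Real.log (3/5) / Real.log (1/2) ≤ 1 := by
  have hl2 : Real.log (1/2) < 0 := Real.log_neg (by norm_num) (by norm_num)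
  have hle : Real.log (1/2) ≤ Real.log (3/5) :=
    Real.log_le_log (by norm_num) (by norm_num)
  rw [div_le_one_iff]
  right; right
  exact ⟨hl2, hle⟩

lemma pow_alpha (n : ℕ) :
    ((1/2:ℝ)^n) ^ (Real.log (3/5) / Real.log (1/2)) = (3/5:ℝ)^n := by
  have hl : Real.log (1/2) ≠ 0 :=
    ne_of_lt (Real.log_neg (by norm_num) (by norm_num))
  have h12 : (1/2:ℝ) ^ (Real.log (3/5) / Real.log (1/2)) = 3/5 := by
    rw [Real.rpow_def_of_pos (by norm_num), mul_comm, div_mul_cancel₀ _ hl,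
      Real.exp_log (by norm_num)]
  rw [← Real.rpow_natCast (1/2:ℝ) n, ← Real.rpow_mul (by norm_num), mul_comm,
    Real.rpow_mul (by norm_num), h12, Real.rpow_natCast]

theorem stmt_16 (u : ℝ → (Fin 3 → ℝ))
    (hcont : ContinuousOn u (Set.Icc 0 1))
    (h0 : u 0 = ![1, 0, 0]) (h1 : u 1 = ![0, 1, 0])
    (hrec0 : ∀ t ∈ Set.Icc (0:ℝ) 1, u (t / 2) = M0.mulVec (u t))
    (hrec1 : ∀ t ∈ Set.Icc (0:ℝ) 1, u ((t + 1) / 2) = M1.mulVec (u t)) :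
    ∃ C : ℝ, ∀ s ∈ Set.Icc (0:ℝ) 1, ∀ t ∈ Set.Icc (0:ℝ) 1,
      norm2 (u s - u t) ≤
        C * |s - t| ^ (Real.log (3/5) / Real.log (1/2)) := by
  set α := Real.log (3/5) / Real.log (1/2) with hα
  -- a uniform bound
  obtain ⟨B, hB⟩ := isCompact_Icc.exists_bound_of_continuousOn
    ((PiLp.continuousLinearEquiv 2 ℝ (fun _ : Fin 3 => ℝ)).symm.continuous.comp_continuousOn hcont)
  set D : ℝ := 2 * B with hDdef
  have hD : ∀ s ∈ Set.Icc (0:ℝ) 1, ∀ t ∈ Set.Icc (0:ℝ) 1, norm2 (u s - u t) ≤ D := by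
    intro s hs t ht
    rw [norm2_eq]
    have : (WithLp.equiv 2 (Fin 3 → ℝ)).symm (u s - u t)
        = (WithLp.equiv 2 (Fin 3 → ℝ)).symm (u s) - (WithLp.equiv 2 (Fin 3 → ℝ)).symm (u t) :=
      WithLp.toLp_sub _ _ _
    rw [this]
    calc ‖_ - _‖ ≤ ‖(WithLp.equiv 2 (Fin 3 → ℝ)).symm (u s)‖
        + ‖(WithLp.equiv 2 (Fin 3 → ℝ)).symm (u t)‖ := norm_sub_le _ _
    _ ≤ B + B := add_le_add (hB s hs) (hB t ht)
    _ = D := by rw [hDdef]; ring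
  have hD0 : 0 ≤ D := le_trans (norm2_nonneg _)
    (hD 0 (by norm_num) 0 (by norm_num))
  have hdy := holder_dyadic u hcont h0 h1 hrec0 hrec1 D hD
  refine ⟨4 * D, ?_⟩
  -- key lemma for ordered pairs
  have key : ∀ a ∈ Set.Icc (0:ℝ) 1, ∀ b ∈ Set.Icc (0:ℝ) 1, a ≤ b → a < b →
      norm2 (u a - u b) ≤ 4 * D * (b - a) ^ α := by
    intro a ha b hb hab hab'
    set d := b - a with hd
    have hd0 : 0 < d := by simp [hd]; linarith
    have hd1 : d ≤ 1 := by
      have := ha.1; have := hb.2; simp only [hd]; linarith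
    have hex : ∃ m : ℕ, (1/2:ℝ)^m < d := exists_pow_lt_of_lt_one hd0 (by norm_num)
    set N := Nat.find hex with hN
    have hNlt : (1/2:ℝ)^N < d := Nat.find_spec hex
    have hNpos : N ≠ 0 := by
      intro h
      rw [h] at hNlt
      simp at hNlt
      linarith
    set n := N - 1 with hn
    have hn1 : (1/2:ℝ)^(n+1) < d := by
      have : n + 1 = N := by omega
      rw [this]; exact hNlt
    have hn2 : d ≤ (1/2:ℝ)^n := by
      have := Nat.find_min hex (show n < N by omega)
      linarith [not_lt.1 this]
    -- choose the dyadic interval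
    set k := ⌊2^n * a⌋₊ with hk
    have ha0 : (0:ℝ) ≤ a := ha.1
    have hka : (k:ℝ)/2^n ≤ a := by
      rw [div_le_iff₀ (by positivity)]
      calc (k:ℝ) ≤ 2^n * a := Nat.floor_le (by positivity)
      _ = a * 2^n := by ring
    have hak : a ≤ ((k:ℝ)+1)/2^n := by
      rw [le_div_iff₀ (by positivity)]
      have := Nat.lt_floor_add_one (2^n * a)
      nlinarith [this]
    have hhalf : (1/2:ℝ)^n * 2^n = 1 := by rw [← mul_pow]; norm_num
    have hbb : b ≤ ((k:ℝ)+2)/2^n := by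
      rw [le_div_iff₀ (by positivity)]
      have h1' : a * 2^n ≤ (k:ℝ)+1 := by
        rw [le_div_iff₀ (by positivity)] at hak
        linarith
      have : b = a + d := by rw [hd]; ring
      rw [this]
      have : d * 2^n ≤ 1 := by
        calc d * 2^n ≤ (1/2:ℝ)^n * 2^n := by nlinarith [hn2]
        _ = 1 := hhalf
      nlinarith
    have hmain : norm2 (u a - u b) ≤ 2 * (D * (3/5)^n) := by
      by_cases hcase : b ≤ ((k:ℝ)+1)/2^n
      · have := hdy n k a ha b hb hka hak (le_trans hka hab) hcase
        linarith [this, mul_nonneg hD0 (by positivity : (0:ℝ) ≤ (3/5:ℝ)^n)]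
      · push_neg at hcase
        set m := ((k:ℝ)+1)/2^n with hm
        have hmmem : m ∈ Set.Icc (0:ℝ) 1 := by
          constructor
          · positivity
          · exact le_trans hcase.le hb.2
        have t1 := hdy n k a ha m hmmem hka hak
          (by rw [hm, div_le_div_iff₀ (by positivity) (by positivity)]; nlinarith)
          (le_refl _)
        have t2 := hdy n (k+1) m hmmem b hb
          (by push_cast; exact le_refl _)
          (by push_cast
              rw [hm, div_le_div_iff₀ (by positivity) (by positivity)]
              nlinarith)
          (by push_cast; exact hcase.le)
          (by push_cast
              have : ((k:ℝ)+1+1) = (k:ℝ)+2 := by ring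
              rw [this]; exact hbb)
        calc norm2 (u a - u b) = norm2 ((u a - u m) + (u m - u b)) := by
              congr 1; ring
        _ ≤ norm2 (u a - u m) + norm2 (u m - u b) := norm2_triangle _ _
        _ ≤ 2 * (D * (3/5)^n) := by linarith
    -- convert to rpow
    have hmono : ((3/5:ℝ))^n ≤ 2 * d ^ α := by
      rw [← pow_alpha n, ← hα]
      have h2d : (1/2:ℝ)^n ≤ 2 * d := by
        have : (1/2:ℝ)^(n+1) = (1/2) * (1/2)^n := by ring
        rw [this] at hn1
        linarith
      calc ((1/2:ℝ)^n) ^ α ≤ (2*d) ^ α :=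
            Real.rpow_le_rpow (by positivity) h2d alpha_pos.le
      _ = 2 ^ α * d ^ α := Real.mul_rpow (by norm_num) hd0.le
      _ ≤ 2 * d ^ α := by
            have h2a : (2:ℝ) ^ α ≤ 2 := by
              calc (2:ℝ) ^ α ≤ 2 ^ (1:ℝ) :=
                    Real.rpow_le_rpow_of_exponent_le (by norm_num) alpha_le_one
              _ = 2 := Real.rpow_one 2
            have hda : (0:ℝ) ≤ d ^ α := Real.rpow_nonneg hd0.le _
            nlinarith
    calc norm2 (u a - u b) ≤ 2 * (D * (3/5)^n) := hmain
    _ ≤ 2 * (D * (2 * d ^ α)) := by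
          have hda : (0:ℝ) ≤ d ^ α := Real.rpow_nonneg hd0.le _
          nlinarith [hmono, hD0]
    _ = 4 * D * d ^ α := by ring
  intro s hs t ht
  rcases lt_trichotomy s t with h | h | h
  · have := key s hs t ht h.le h
    rwa [show |s - t| = t - s by rw [abs_of_neg (by linarith)]; ring]
  · subst h
    simp only [sub_self, abs_zero]
    rw [Real.zero_rpow (ne_of_gt alpha_pos), mul_zero]
    simp [norm2]
  · have := key t ht s hs h.le h
    rw [show |s - t| = s - t by rw [abs_of_pos (by linarith)]]
    calc norm2 (u s - u t) = norm2 (-(u t - u s)) := by rw [neg_sub]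
    _ = norm2 (u t - u s) := norm2_neg _
    _ ≤ 4 * D * (s - t) ^ α := this
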